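/- For every k ≥ 1, the graph X_k is P_6-free, i.e. it contains no induced path on 6 vertices. -/

import Mathlib

/-! ### P_n-free graphs -/

/-- `f` lists the vertices of an induced path on `n` vertices in `G`. -/
def IsInducedPath {V : Type*} (G : SimpleGraph V) (n : ℕ) (f : Fin n → V) : Prop :=
  Function.Injective f ∧
    ∀ a b : Fin n, G.Adj (f a) (f b) ↔ (a.val + 1 = b.val ∨ b.val + 1 = a.val)

/-- `G` contains no induced path on `n` vertices. -/
def PFree {V : Type*} (G : SimpleGraph V) (n : ℕ) : Prop :=
  ¬ ∃ f : Fin n → V, IsInducedPath G n f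

/-! ### The graphs `X_k` -/

/-- Vertex set of the graph `X_k` (with a junk value at `k = 0`). -/
def XV : ℕ → Type
  | 0 => PUnit
  | 1 => PUnit
  | 2 => Bool
  | (n+3) => Option (XV (n+2) ⊕ XV (n+2))

/-- The root of `X_k`. -/
def XRoot : (k : ℕ) → XV k
  | 0 => PUnit.unit
  | 1 => PUnit.unit
  | 2 => true
  | (_+3) => none

/-- The side of a vertex of `X_k`: `true` is the root side, `false` the non-root side. -/
def XSide : (k : ℕ) → XV k → Bool
  | 0, _ => true
  | 1, _ => true
  | 2, v => v
  | (_+3), none => true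
  | (n+3), some (Sum.inl x) => !(XSide (n+2) x)
  | (n+3), some (Sum.inr x) => XSide (n+2) x

/-- Base adjacency relation of `X_k`:  for `k ≥ 3`, `X_k` consists of two disjoint copies of
`X_{k-1}` with no edges in between, together with a root vertex joined to the root side of the
first copy and to the non-root side of the second copy. -/
def XRel : (k : ℕ) → XV k → XV k → Prop
  | 0, _, _ => False
  | 1, _, _ => False
  | 2, u, v => u ≠ v
  | (n+3), none, some (Sum.inl x) => XSide (n+2) x = true
  | (n+3), none, some (Sum.inr x) => XSide (n+2) x = false
  | (n+3), some (Sum.inl x), none => XSide (n+2) x = true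
  | (n+3), some (Sum.inr x), none => XSide (n+2) x = false
  | (n+3), some (Sum.inl x), some (Sum.inl y) => XRel (n+2) x y
  | (n+3), some (Sum.inr x), some (Sum.inr y) => XRel (n+2) x y
  | (_+3), _, _ => False

/-- The graph `X_k`. -/
def XGraph (k : ℕ) : SimpleGraph (XV k) := SimpleGraph.fromRel (XRel k)

/-! ### Auxiliary lemmas -/

/-- Every vertex of `X_{n+3}` is the root, or in the first copy, or in the second copy. -/
lemma XV_cases (n : ℕ) (v : XV (n+3)) :
    v = none ∨ (∃ x, v = some (Sum.inl x)) ∨ (∃ x, v = some (Sum.inr x)) := by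
  rcases v with _ | (x|x)
  · exact Or.inl rfl
  · exact Or.inr (Or.inl ⟨x, rfl⟩)
  · exact Or.inr (Or.inr ⟨x, rfl⟩)

/-- The base relation only relates vertices on different sides. -/
lemma xrel_side : ∀ (k : ℕ) (u v : XV k), XRel k u v → XSide k u ≠ XSide k v
  | 0, _, _, h => h.elim
  | 1, _, _, h => h.elim
  | 2, u, v, h => h
  | (n+3), none, none, h => h.elim
  | (n+3), none, some (Sum.inl x), h => by
      have hx : XSide (n+2) x = true := h
      intro he
      have he' : true = (!(XSide (n+2) x)) := he
      rw [hx] at he'; exact absurd he' (by decide)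
  | (n+3), none, some (Sum.inr x), h => by
      have hx : XSide (n+2) x = false := h
      intro he
      have he' : true = (XSide (n+2) x) := he
      rw [hx] at he'; exact absurd he' (by decide)
  | (n+3), some (Sum.inl x), none, h => by
      have hx : XSide (n+2) x = true := h
      intro he
      have he' : (!(XSide (n+2) x)) = true := he
      rw [hx] at he'; exact absurd he' (by decide)
  | (n+3), some (Sum.inr x), none, h => by
      have hx : XSide (n+2) x = false := h
      intro he
      have he' : (XSide (n+2) x) = true := he
      rw [hx] at he'; exact absurd he' (by decide)
  | (n+3), some (Sum.inl x), some (Sum.inl y), h => by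
      intro he
      have he' : (!(XSide (n+2) x)) = (!(XSide (n+2) y)) := he
      exact xrel_side (n+2) x y h (by simpa using he')
  | (n+3), some (Sum.inr x), some (Sum.inr y), h => xrel_side (n+2) x y h
  | (n+3), some (Sum.inl x), some (Sum.inr y), h => h.elim
  | (n+3), some (Sum.inr x), some (Sum.inl y), h => h.elim

/-- Adjacent vertices lie on different sides. -/
lemma adj_side {k : ℕ} {u v : XV k} (h : (XGraph k).Adj u v) : XSide k u ≠ XSide k v := by
  rw [XGraph, SimpleGraph.fromRel_adj] at h
  rcases h.2 with h' | h'
  · exact xrel_side k u v h'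
  · exact (xrel_side k v u h').symm

lemma adj_none_inl (n : ℕ) (x : XV (n+2)) :
    (XGraph (n+3)).Adj none (some (Sum.inl x)) ↔ XSide (n+2) x = true := by
  rw [XGraph]; refine (SimpleGraph.fromRel_adj _ _ _).trans ?_
  constructor
  · rintro ⟨-, h | h⟩ <;> exact h
  · intro h; exact ⟨fun he => Option.some_ne_none _ he.symm, Or.inl h⟩

lemma adj_none_inr (n : ℕ) (x : XV (n+2)) :
    (XGraph (n+3)).Adj none (some (Sum.inr x)) ↔ XSide (n+2) x = false := by
  rw [XGraph]; refine (SimpleGraph.fromRel_adj _ _ _).trans ?_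
  constructor
  · rintro ⟨-, h | h⟩ <;> exact h
  · intro h; exact ⟨fun he => Option.some_ne_none _ he.symm, Or.inl h⟩

lemma adj_inl_inl (n : ℕ) (x y : XV (n+2)) :
    (XGraph (n+3)).Adj (some (Sum.inl x)) (some (Sum.inl y)) ↔ (XGraph (n+2)).Adj x y := by
  rw [XGraph, XGraph, SimpleGraph.fromRel_adj (XRel (n+2))]
  refine (SimpleGraph.fromRel_adj _ _ _).trans ?_
  constructor
  · rintro ⟨hne, h⟩
    exact ⟨fun he => hne (by rw [he]), h⟩
  · rintro ⟨hne, h⟩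
    exact ⟨fun he => hne (Sum.inl.inj (Option.some.inj he)), h⟩

lemma adj_inr_inr (n : ℕ) (x y : XV (n+2)) :
    (XGraph (n+3)).Adj (some (Sum.inr x)) (some (Sum.inr y)) ↔ (XGraph (n+2)).Adj x y := by
  rw [XGraph, XGraph, SimpleGraph.fromRel_adj (XRel (n+2))]
  refine (SimpleGraph.fromRel_adj _ _ _).trans ?_
  constructor
  · rintro ⟨hne, h⟩
    exact ⟨fun he => hne (by rw [he]), h⟩
  · rintro ⟨hne, h⟩
    exact ⟨fun he => hne (Sum.inr.inj (Option.some.inj he)), h⟩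

lemma not_adj_inl_inr (n : ℕ) (x y : XV (n+2)) :
    ¬ (XGraph (n+3)).Adj (some (Sum.inl x)) (some (Sum.inr y)) := by
  rw [XGraph]; refine mt (SimpleGraph.fromRel_adj _ _ _).mp ?_
  rintro ⟨-, h | h⟩ <;> exact h

/-- If a vertex of the first copy is adjacent to a non-root vertex, that vertex is also in the
first copy. -/
lemma adj_inl_forces (n : ℕ) (x : XV (n+2)) (b : XV (n+3)) (hb : b ≠ none)
    (h : (XGraph (n+3)).Adj (some (Sum.inl x)) b) :
    ∃ y, b = some (Sum.inl y) ∧ (XGraph (n+2)).Adj x y := by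
  rcases XV_cases n b with rfl | ⟨y, rfl⟩ | ⟨y, rfl⟩
  · exact absurd rfl hb
  · exact ⟨y, rfl, (adj_inl_inl n x y).mp h⟩
  · exact absurd h (not_adj_inl_inr n x y)

lemma adj_inr_forces (n : ℕ) (x : XV (n+2)) (b : XV (n+3)) (hb : b ≠ none)
    (h : (XGraph (n+3)).Adj (some (Sum.inr x)) b) :
    ∃ y, b = some (Sum.inr y) ∧ (XGraph (n+2)).Adj x y := by
  rcases XV_cases n b with rfl | ⟨y, rfl⟩ | ⟨y, rfl⟩
  · exact absurd rfl hb
  · exact absurd h.symm (not_adj_inl_inr n y x)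
  · exact ⟨y, rfl, (adj_inr_inr n x y).mp h⟩

/-- The root of `X_{n+3}` cannot start an induced path on four vertices. -/
lemma no_path_from_none (n : ℕ) (a b c : XV (n+3)) (hb : b ≠ none) (hc : c ≠ none)
    (h1 : (XGraph (n+3)).Adj none a)
    (h2 : (XGraph (n+3)).Adj a b)
    (h3 : (XGraph (n+3)).Adj b c)
    (h4 : ¬ (XGraph (n+3)).Adj none c) : False := by
  rcases XV_cases n a with rfl | ⟨x, rfl⟩ | ⟨x, rfl⟩
  · exact h1.ne rfl
  · obtain ⟨y, rfl, hxy⟩ := adj_inl_forces n x b hb h2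
    obtain ⟨z, rfl, hyz⟩ := adj_inl_forces n y c hc h3
    have hx : XSide (n+2) x = true := (adj_none_inl n x).mp h1
    have hz : XSide (n+2) z ≠ true := fun hz => h4 ((adj_none_inl n z).mpr hz)
    have sxy := adj_side hxy
    have syz := adj_side hyz
    apply hz
    rcases Bool.eq_false_or_eq_true (XSide (n+2) y) with hy | hy <;>
      rcases Bool.eq_false_or_eq_true (XSide (n+2) z) with hz' | hz' <;>
      simp_all
  · obtain ⟨y, rfl, hxy⟩ := adj_inr_forces n x b hb h2
    obtain ⟨z, rfl, hyz⟩ := adj_inr_forces n y c hc h3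
    have hx : XSide (n+2) x = false := (adj_none_inr n x).mp h1
    have hz : XSide (n+2) z ≠ false := fun hz => h4 ((adj_none_inr n z).mpr hz)
    have sxy := adj_side hxy
    have syz := adj_side hyz
    apply hz
    rcases Bool.eq_false_or_eq_true (XSide (n+2) y) with hy | hy <;>
      rcases Bool.eq_false_or_eq_true (XSide (n+2) z) with hz' | hz' <;>
      simp_all

/-- Extract the `X_{n+2}`-coordinate of a non-root vertex of `X_{n+3}`. -/
def extractX (n : ℕ) : XV (n+3) → XV (n+2)
  | none => XRoot (n+2)
  | some (Sum.inl x) => x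
  | some (Sum.inr x) => x

lemma chain_inl (n : ℕ) (f : Fin 6 → XV (n+3)) (hnone : ∀ i, f i ≠ none)
    (hadj : ∀ a b : Fin 6, a.val + 1 = b.val → (XGraph (n+3)).Adj (f a) (f b))
    (x0 : XV (n+2)) (h0 : f 0 = some (Sum.inl x0)) :
    ∀ i : Fin 6, ∃ x, f i = some (Sum.inl x) := by
  have key : ∀ m : ℕ, (hm : m < 6) → ∃ x, f ⟨m, hm⟩ = some (Sum.inl x) := by
    intro m
    induction m with
    | zero => intro hm; exact ⟨x0, h0⟩
    | succ p ih =>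
        intro hm
        obtain ⟨x, hx⟩ := ih (by omega)
        have h := hadj ⟨p, by omega⟩ ⟨p+1, hm⟩ rfl
        rw [hx] at h
        obtain ⟨y, hy, -⟩ := adj_inl_forces n x _ (hnone _) h
        exact ⟨y, hy⟩
  intro i
  exact key i.val i.isLt

lemma chain_inr (n : ℕ) (f : Fin 6 → XV (n+3)) (hnone : ∀ i, f i ≠ none)
    (hadj : ∀ a b : Fin 6, a.val + 1 = b.val → (XGraph (n+3)).Adj (f a) (f b))
    (x0 : XV (n+2)) (h0 : f 0 = some (Sum.inr x0)) :
    ∀ i : Fin 6, ∃ x, f i = some (Sum.inr x) := by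
  have key : ∀ m : ℕ, (hm : m < 6) → ∃ x, f ⟨m, hm⟩ = some (Sum.inr x) := by
    intro m
    induction m with
    | zero => intro hm; exact ⟨x0, h0⟩
    | succ p ih =>
        intro hm
        obtain ⟨x, hx⟩ := ih (by omega)
        have h := hadj ⟨p, by omega⟩ ⟨p+1, hm⟩ rfl
        rw [hx] at h
        obtain ⟨y, hy, -⟩ := adj_inr_forces n x _ (hnone _) h
        exact ⟨y, hy⟩
  intro i
  exact key i.val i.isLt

/-- Inductive step: if `X_{n+2}` is `P_6`-free then so is `X_{n+3}`. -/
lemma step (n : ℕ) (IH : PFree (XGraph (n+2)) 6) : PFree (XGraph (n+3)) 6 := by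
  rintro ⟨f, hinj, hadj⟩
  have hadj' : ∀ a b : Fin 6, a.val + 1 = b.val → (XGraph (n+3)).Adj (f a) (f b) :=
    fun a b h => (hadj a b).mpr (Or.inl h)
  have hadjN : ∀ (a b : ℕ) (ha : a < 6) (hb : b < 6),
      (XGraph (n+3)).Adj (f ⟨a, ha⟩) (f ⟨b, hb⟩) ↔ (a + 1 = b ∨ b + 1 = a) :=
    fun a b ha hb => hadj ⟨a, ha⟩ ⟨b, hb⟩
  have hinjN : ∀ (a b : ℕ) (ha : a < 6) (hb : b < 6), f ⟨a, ha⟩ = f ⟨b, hb⟩ → a = b :=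
    fun a b ha hb h => congrArg Fin.val (hinj h)
  -- The root vertex `none` is not on the path.
  have hnone : ∀ i : Fin 6, f i ≠ none := by
    rintro ⟨iv, hiv⟩ hi
    by_cases hle : iv ≤ 2
    · have l1 : iv + 1 < 6 := by omega
      have l2 : iv + 2 < 6 := by omega
      have l3 : iv + 3 < 6 := by omega
      have h1 : (XGraph (n+3)).Adj none (f ⟨iv+1, l1⟩) := by
        rw [← hi]; exact (hadjN iv (iv+1) hiv l1).mpr (Or.inl rfl)
      have h2 : (XGraph (n+3)).Adj (f ⟨iv+1, l1⟩) (f ⟨iv+2, l2⟩) :=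
        (hadjN (iv+1) (iv+2) l1 l2).mpr (Or.inl rfl)
      have h3 : (XGraph (n+3)).Adj (f ⟨iv+2, l2⟩) (f ⟨iv+3, l3⟩) :=
        (hadjN (iv+2) (iv+3) l2 l3).mpr (Or.inl rfl)
      have h4 : ¬ (XGraph (n+3)).Adj none (f ⟨iv+3, l3⟩) := by
        rw [← hi]
        intro h
        have := (hadjN iv (iv+3) hiv l3).mp h
        omega
      exact no_path_from_none n _ _ _
        (fun h => by have := hinjN _ _ l2 hiv (h.trans hi.symm); omega)
        (fun h => by have := hinjN _ _ l3 hiv (h.trans hi.symm); omega)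
        h1 h2 h3 h4
    · have l1 : iv - 1 < 6 := by omega
      have l2 : iv - 2 < 6 := by omega
      have l3 : iv - 3 < 6 := by omega
      have h1 : (XGraph (n+3)).Adj none (f ⟨iv-1, l1⟩) := by
        rw [← hi]; exact ((hadjN (iv-1) iv l1 hiv).mpr (Or.inl (by omega))).symm
      have h2 : (XGraph (n+3)).Adj (f ⟨iv-1, l1⟩) (f ⟨iv-2, l2⟩) :=
        ((hadjN (iv-2) (iv-1) l2 l1).mpr (Or.inl (by omega))).symm
      have h3 : (XGraph (n+3)).Adj (f ⟨iv-2, l2⟩) (f ⟨iv-3, l3⟩) :=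
        ((hadjN (iv-3) (iv-2) l3 l2).mpr (Or.inl (by omega))).symm
      have h4 : ¬ (XGraph (n+3)).Adj none (f ⟨iv-3, l3⟩) := by
        rw [← hi]
        intro h
        have := (hadjN iv (iv-3) hiv l3).mp h
        omega
      exact no_path_from_none n _ _ _
        (fun h => by have := hinjN _ _ l2 hiv (h.trans hi.symm); omega)
        (fun h => by have := hinjN _ _ l3 hiv (h.trans hi.symm); omega)
        h1 h2 h3 h4
  -- The path lies entirely inside one copy of `X_{n+2}`.
  set g : Fin 6 → XV (n+2) := fun i => extractX n (f i) with hg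
  rcases XV_cases n (f 0) with h0 | ⟨x0, h0⟩ | ⟨x0, h0⟩
  · exact hnone 0 h0
  · have hall := chain_inl n f hnone hadj' x0 h0
    have hfe : ∀ i, f i = some (Sum.inl (g i)) := by
      intro i
      obtain ⟨x, hx⟩ := hall i
      rw [hg]
      simp only [hx]
      rfl
    refine IH ⟨g, ?_, ?_⟩
    · intro a b hab
      apply hinj
      rw [hfe a, hfe b, hab]
    · intro a b
      rw [← hadj a b]
      rw [hfe a, hfe b]
      exact (adj_inl_inl n (g a) (g b)).symm
  · have hall := chain_inr n f hnone hadj' x0 h0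
    have hfe : ∀ i, f i = some (Sum.inr (g i)) := by
      intro i
      obtain ⟨x, hx⟩ := hall i
      rw [hg]
      simp only [hx]
      rfl
    refine IH ⟨g, ?_, ?_⟩
    · intro a b hab
      apply hinj
      rw [hfe a, hfe b, hab]
    · intro a b
      rw [← hadj a b]
      rw [hfe a, hfe b]
      exact (adj_inr_inr n (g a) (g b)).symm

lemma pfree_aux : ∀ k : ℕ, PFree (XGraph (k+1)) 6
  | 0 => by
      rintro ⟨f, hinj, -⟩
      have h : f 0 = f 1 := Subsingleton.elim (α := PUnit) (f 0) (f 1)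
      exact absurd (hinj h) (by decide)
  | 1 => by
      rintro ⟨f, hinj, -⟩
      have hinj' : Function.Injective (fun i : Fin 6 => (show Bool from f i)) :=
        fun a b h => hinj h
      have hc := Fintype.card_le_of_injective _ hinj'
      simp at hc
  | (n+2) => step n (pfree_aux (n+1))

theorem stmt3 (k : ℕ) (hk : 1 ≤ k) : PFree (XGraph k) 6 := by
  rcases k with _ | m
  · omega
  · exact pfree_aux m
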